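/- Let λ ∈ P⁺ (so J_λ = 𝓘) and let V be a highest weight 𝔤-module with highest weight λ such that J_V^c ≠ ∅, say |J_V^c| = n. Fix nonnegative integers c(i) for i ∈ J_V^c, and let i_1, …, i_n be any enumeration of J_V^c with the property that for every 1 ≤ t ≤ n, either the set {i_t, i_{t+1}, …, i_n} is independent, or there exists r > t with ⟨α_{i_t}, α_{i_r}^∨⟩ ≠ 0 and c(i_r) ≥ c(i_t). Then f_{i_1}^{c(i_1)} ⋯ f_{i_n}^{c(i_n)} · v_λ ≠ 0 in V; in particular f_{i_1}^{c(i_1)} ⋯ f_{i_n}^{c(i_n)} · V_λ ≠ 0. -/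

import Mathlib

open scoped BigOperators

attribute [local instance] Classical.propDecidable

namespace KM

/-- The set of `ℤ≥0`-linear combinations of elements of `S`. -/
def cone {W : Type} [AddCommMonoid W] (S : Set W) : Set W :=
  (AddSubmonoid.closure S : AddSubmonoid W)

/-- Minkowski difference of two sets. -/
def mdiff {W : Type} [Sub W] (A B : Set W) : Set W :=
  {x | ∃ a ∈ A, ∃ b ∈ B, x = a - b}

variable {g : Type} [LieRing g] [LieAlgebra ℂ g]

/-- The `μ`-weight space of a `g`-module `V` with respect to a Cartan subalgebra `H`. -/
def wtSpace (H : LieSubalgebra ℂ g) (V : Type) [AddCommGroup V] [Module ℂ V]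
    [LieRingModule g V] [LieModule ℂ g V] (μ : Module.Dual ℂ H) : Submodule ℂ V where
  carrier := {w | ∀ h : H, ⁅(h : g), w⁆ = μ h • w}
  add_mem' := by
    intro a b ha hb h
    rw [lie_add, ha h, hb h, smul_add]
  zero_mem' := by
    intro h
    rw [lie_zero, smul_zero]
  smul_mem' := by
    intro t w hw h
    rw [lie_smul, hw h, smul_smul, smul_smul, mul_comm]

/-- The set of weights of a `g`-module `V`. -/
def wtSet (H : LieSubalgebra ℂ g) (V : Type) [AddCommGroup V] [Module ℂ V]
    [LieRingModule g V] [LieModule ℂ g V] : Set (Module.Dual ℂ H) :=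
  {μ | wtSpace H V μ ≠ ⊥}

/-- Iterated action `x^n · w` of an element `x : g` on a module vector. -/
def actPow {V : Type} [AddCommGroup V] [LieRingModule g V] (x : g) (n : ℕ) (w : V) : V :=
  (fun u => ⁅x, u⁆)^[n] w

/-- The data of a Kac--Moody Lie algebra `g` attached to a generalized Cartan matrix `A`,
with Cartan subalgebra `H`, simple roots `α`, simple coroots `coroot`, and Chevalley
generators `e`, `f`. -/
structure Data (𝓘 : Type) (g : Type) [LieRing g] [LieAlgebra ℂ g] where
  H : LieSubalgebra ℂ g
  α : 𝓘 → Module.Dual ℂ H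
  coroot : 𝓘 → H
  e : 𝓘 → g
  f : 𝓘 → g
  A : 𝓘 → 𝓘 → ℤ
  pairing_eq : ∀ i j, α i (coroot j) = (A j i : ℂ)
  A_diag : ∀ i, A i i = 2
  A_offdiag : ∀ i j, i ≠ j → A i j ≤ 0
  A_zero_iff : ∀ i j, A i j = 0 ↔ A j i = 0
  indepSimple : LinearIndependent ℂ α
  cartan_abelian : ∀ h h' : H, ⁅(h : g), (h' : g)⁆ = 0
  lie_h_e : ∀ (h : H) (i : 𝓘), ⁅(h : g), e i⁆ = α i h • e i
  lie_h_f : ∀ (h : H) (i : 𝓘), ⁅(h : g), f i⁆ = -(α i h) • f i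
  lie_e_f_same : ∀ i, ⁅e i, f i⁆ = (coroot i : g)
  lie_e_f_ne : ∀ i j, i ≠ j → ⁅e i, f j⁆ = 0
  serre_e : ∀ i j, i ≠ j → ((LieAlgebra.ad ℂ g (e i)) ^ (1 - A i j).toNat) (e j) = 0
  serre_f : ∀ i j, i ≠ j → ((LieAlgebra.ad ℂ g (f i)) ^ (1 - A i j).toNat) (f j) = 0
  generates : LieSubalgebra.lieSpan ℂ g ((H : Set g) ∪ Set.range e ∪ Set.range f) = ⊤
  rootDecomp : (⨆ μ : Module.Dual ℂ H, wtSpace H g μ) = ⊤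
  zeroWtSpace : wtSpace H g (0 : Module.Dual ℂ H) = H.toSubmodule
  root_pm : ∀ μ : Module.Dual ℂ H, μ ≠ 0 → wtSpace H g μ ≠ ⊥ →
      μ ∈ cone (Set.range α) ∨ -μ ∈ cone (Set.range α)

variable {𝓘 : Type}

/-- `V` is a highest weight `g`-module with highest weight `lam` and highest weight
vector `v`; equivalently, `V` is a nonzero quotient of the Verma module `M(lam)`. -/
def IsHW (D : Data 𝓘 g) (V : Type) [AddCommGroup V] [Module ℂ V] [LieRingModule g V]
    [LieModule ℂ g V] (lam : Module.Dual ℂ D.H) (v : V) : Prop :=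
  v ≠ 0 ∧ v ∈ wtSpace D.H V lam ∧ (∀ i : 𝓘, ⁅D.e i, v⁆ = 0) ∧
    LieSubmodule.lieSpan ℂ g {v} = ⊤

/-- `J_λ`, the set of integrable directions of `lam`. -/
def Jlam (D : Data 𝓘 g) (lam : Module.Dual ℂ D.H) : Set 𝓘 :=
  {i | ∃ n : ℕ, lam (D.coroot i) = (n : ℂ)}

/-- `Π_J`, the simple roots indexed by `J`. -/
def PiJ (D : Data 𝓘 g) (J : Set 𝓘) : Set (Module.Dual ℂ D.H) := D.α '' J

/-- The root system `Δ` of `g`. -/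
def roots (D : Data 𝓘 g) : Set (Module.Dual ℂ D.H) :=
  {μ | μ ≠ 0 ∧ wtSpace D.H g μ ≠ ⊥}

/-- The positive roots `Δ⁺`. -/
def posRoots (D : Data 𝓘 g) : Set (Module.Dual ℂ D.H) :=
  roots D ∩ cone (Set.range D.α)

/-- The positive roots `Δ⁺_J` of the parabolic subroot system `Δ_J = Δ ∩ ℤΠ_J`. -/
def posRootsJ (D : Data 𝓘 g) (J : Set 𝓘) : Set (Module.Dual ℂ D.H) :=
  posRoots D ∩ (Submodule.span ℤ (D.α '' J) : Set (Module.Dual ℂ D.H))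

/-- `wt_J V := wt V ∩ (λ − ℤ≥0 Π_J)`. -/
def wtJ (D : Data 𝓘 g) (V : Type) [AddCommGroup V] [Module ℂ V] [LieRingModule g V]
    [LieModule ℂ g V] (lam : Module.Dual ℂ D.H) (J : Set 𝓘) : Set (Module.Dual ℂ D.H) :=
  wtSet D.H V ∩ {μ | ∃ x ∈ cone (PiJ D J), μ = lam - x}

/-- A subset `S` of nodes is independent if its induced Dynkin subdiagram has no edges. -/
def IndepSet (D : Data 𝓘 g) (S : Set 𝓘) : Prop :=
  ∀ i ∈ S, ∀ j ∈ S, i ≠ j → D.α i (D.coroot j) = 0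

/-- `J_V`: the union of all minimal independent subsets `I ⊆ J_λ` with
`λ − Σ_{i∈I} (λ(α_i^∨)+1)α_i ∉ wt V`. -/
def JV (D : Data 𝓘 g) (V : Type) [AddCommGroup V] [Module ℂ V] [LieRingModule g V]
    [LieModule ℂ g V] (lam : Module.Dual ℂ D.H) : Set 𝓘 :=
  {i | ∃ I : Finset 𝓘, (↑I : Set 𝓘) ⊆ Jlam D lam ∧ IndepSet D (↑I : Set 𝓘) ∧
    (lam - ∑ k ∈ I, (lam (D.coroot k) + 1) • D.α k) ∉ wtSet D.H V ∧
    (∀ K : Finset 𝓘, K ⊂ I →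
      (lam - ∑ k ∈ K, (lam (D.coroot k) + 1) • D.α k) ∈ wtSet D.H V) ∧
    i ∈ I}


section Dev
variable {𝓘 : Type} {g : Type} [LieRing g] [LieAlgebra ℂ g]
  {V : Type} [AddCommGroup V] [Module ℂ V] [LieRingModule g V] [LieModule ℂ g V]

lemma mem_wtSpace {H : LieSubalgebra ℂ g} {μ : Module.Dual ℂ H} {w : V} :
    w ∈ wtSpace H V μ ↔ ∀ h : H, ⁅(h : g), w⁆ = μ h • w := Iff.rfl

/-- apply a word of `f`'s to a vector -/
def fwordOn (D : Data 𝓘 g) (L : List 𝓘) (w : V) : V := L.foldr (fun i u => ⁅D.f i, u⁆) w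

lemma fwordOn_nil (D : Data 𝓘 g) (w : V) : fwordOn D [] w = w := rfl
lemma fwordOn_cons (D : Data 𝓘 g) (i : 𝓘) (L : List 𝓘) (w : V) :
    fwordOn D (i :: L) w = ⁅D.f i, fwordOn D L w⁆ := rfl
lemma fwordOn_append (D : Data 𝓘 g) (L₁ L₂ : List 𝓘) (w : V) :
    fwordOn D (L₁ ++ L₂) w = fwordOn D L₁ (fwordOn D L₂ w) := List.foldr_append

lemma lie_f_mem_wtSpace (D : Data 𝓘 g) {ν : Module.Dual ℂ D.H} {w : V} (hw : w ∈ wtSpace D.H V ν)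
    (i : 𝓘) : ⁅D.f i, w⁆ ∈ wtSpace D.H V (ν - D.α i) := by
  intro h
  rw [leibniz_lie, D.lie_h_f h i, hw h, smul_lie, lie_smul, LinearMap.sub_apply,
    sub_smul, neg_smul]
  abel

lemma fwordOn_mem_wtSpace (D : Data 𝓘 g) {ν : Module.Dual ℂ D.H} {w : V} (hw : w ∈ wtSpace D.H V ν)
    (L : List 𝓘) : fwordOn D L w ∈ wtSpace D.H V (ν - (L.map D.α).sum) := by
  induction L with
  | nil => simpa [fwordOn_nil] using hw
  | cons i L ih =>
      have := lie_f_mem_wtSpace D ih i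
      rw [fwordOn_cons]
      convert this using 2
      simp only [List.map_cons, List.sum_cons]
      abel

lemma lie_e_fwordOn (D : Data 𝓘 g) {w : V} {i : 𝓘} (hw : ⁅D.e i, w⁆ = 0) {L : List 𝓘}
    (hL : i ∉ L) : ⁅D.e i, fwordOn D L w⁆ = 0 := by
  induction L with
  | nil => simpa [fwordOn_nil] using hw
  | cons j L ih =>
      have hij : i ≠ j := fun h => hL (h ▸ List.mem_cons_self)
      rw [fwordOn_cons, leibniz_lie, D.lie_e_f_ne i j hij, zero_lie,
        ih (fun h => hL (List.mem_cons_of_mem _ h)), lie_zero, add_zero]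

lemma actPow_eq_fwordOn_replicate (D : Data 𝓘 g) (i : 𝓘) (m : ℕ) (w : V) :
    actPow (D.f i) m w = fwordOn D (List.replicate m i) w := by
  induction m with
  | zero => rfl
  | succ m ih =>
      rw [actPow, Function.iterate_succ_apply', List.replicate_succ, fwordOn_cons, ← ih]; rfl

set_option linter.unusedSectionVars false

lemma actPow_succ (x : g) (m : ℕ) (w : V) :
    actPow x (m+1) w = ⁅x, actPow x m w⁆ := Function.iterate_succ_apply' _ _ _

lemma actPow_mem_wtSpace (D : Data 𝓘 g) {μ : Module.Dual ℂ D.H} {w : V}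
    (hw : w ∈ wtSpace D.H V μ) (i : 𝓘) (m : ℕ) :
    actPow (D.f i) m w ∈ wtSpace D.H V (μ - (m : ℂ) • D.α i) := by
  rw [actPow_eq_fwordOn_replicate]
  have := fwordOn_mem_wtSpace D hw (List.replicate m i)
  convert this using 2
  rw [List.map_replicate, List.sum_replicate, Nat.cast_smul_eq_nsmul]

/-- sl2 computation: `[e_i, f_i^{m+1} w] = (m+1)(μ(α_i^∨)-m) f_i^m w`. -/
lemma lie_e_actPow (D : Data 𝓘 g) {μ : Module.Dual ℂ D.H} {w : V}
    (hw : w ∈ wtSpace D.H V μ) {i : 𝓘} (he : ⁅D.e i, w⁆ = 0) (m : ℕ) :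
    ⁅D.e i, actPow (D.f i) (m+1) w⁆ =
      (((m : ℂ)+1) * (μ (D.coroot i) - (m : ℂ))) • actPow (D.f i) m w := by
  induction m with
  | zero =>
      have h0 : actPow (D.f i) 0 w = w := rfl
      rw [actPow_succ, h0, leibniz_lie, D.lie_e_f_same i, he, lie_zero, add_zero,
        hw (D.coroot i)]
      norm_num
  | succ m ih =>
      have hcor : ⁅((D.coroot i : g)), actPow (D.f i) (m+1) w⁆ =
          (μ (D.coroot i) - ((m:ℂ)+1) * 2) • actPow (D.f i) (m+1) w := by
        have hmem := actPow_mem_wtSpace D hw i (m+1)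
        have := hmem (D.coroot i)
        rw [this]
        congr 1
        have hα : D.α i (D.coroot i) = 2 := by
          rw [D.pairing_eq, D.A_diag]; norm_num
        simp only [LinearMap.sub_apply, LinearMap.smul_apply, smul_eq_mul, hα]
        push_cast
        ring
      rw [actPow_succ, leibniz_lie, D.lie_e_f_same i, ih, lie_smul, ← actPow_succ, hcor,
        ← add_smul]
      congr 1
      push_cast
      ring

lemma actPow_ne_zero (D : Data 𝓘 g) {μ : Module.Dual ℂ D.H} {w : V}
    (hw : w ∈ wtSpace D.H V μ) {i : 𝓘} (he : ⁅D.e i, w⁆ = 0) (hw0 : w ≠ 0) (m : ℕ)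
    (hs : ∀ j : ℕ, j < m → μ (D.coroot i) ≠ (j : ℂ)) :
    actPow (D.f i) m w ≠ 0 := by
  induction m with
  | zero => exact hw0
  | succ m ih =>
      intro h0
      have := lie_e_actPow D hw he m
      rw [h0, lie_zero] at this
      have hsc : (((m : ℂ)+1) * (μ (D.coroot i) - (m : ℂ))) ≠ 0 := by
        apply mul_ne_zero
        · exact_mod_cast Nat.succ_ne_zero m
        · intro h
          exact hs m (Nat.lt_succ_self m) (by linear_combination h)
      have := (smul_eq_zero.mp this.symm).resolve_left hsc
      exact ih (fun j hj => hs j (Nat.lt_succ_of_lt hj)) this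

/-- the operator on `V` given by `f i`. -/
noncomputable def Fop (D : Data 𝓘 g) (V : Type) [AddCommGroup V] [Module ℂ V]
    [LieRingModule g V] [LieModule ℂ g V] (i : 𝓘) : Module.End ℂ V :=
  LieModule.toEnd ℂ g V (D.f i)

lemma fwordOn_eq_prod (D : Data 𝓘 g) (L : List 𝓘) (w : V) :
    fwordOn D L w = (L.map (Fop D V)).prod w := by
  induction L with
  | nil => rfl
  | cons i L ih =>
      rw [fwordOn_cons, ih, List.map_cons, List.prod_cons, Module.End.mul_apply]
      rfl

lemma commute_Fop (D : Data 𝓘 g) {i j : 𝓘} (hij : ⁅D.f i, D.f j⁆ = 0) :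
    Commute (Fop D V i) (Fop D V j) := by
  show Fop D V i * Fop D V j = Fop D V j * Fop D V i
  ext w
  show ⁅D.f i, ⁅D.f j, w⁆⁆ = ⁅D.f j, ⁅D.f i, w⁆⁆
  rw [leibniz_lie, hij, zero_lie, zero_add]

lemma f_f_commute (D : Data 𝓘 g) {i j : 𝓘} (hne : i ≠ j) (h0 : D.α i (D.coroot j) = 0) :
    ⁅D.f j, D.f i⁆ = 0 := by
  have hA : D.A j i = 0 := by
    have := D.pairing_eq i j
    rw [h0] at this
    exact_mod_cast this.symm
  have := D.serre_f j i hne.symm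
  rw [hA] at this
  norm_num at this
  exact this

lemma fwordOn_perm (D : Data 𝓘 g) {L₁ L₂ : List 𝓘} (hperm : L₁.Perm L₂)
    (hcomm : ∀ a ∈ L₁, ∀ b ∈ L₁, Commute (Fop D V a) (Fop D V b)) (w : V) :
    fwordOn D L₁ w = fwordOn D L₂ w := by
  rw [fwordOn_eq_prod, fwordOn_eq_prod]
  congr 1
  apply List.Perm.prod_eq' (hperm.map _)
  apply List.pairwise_of_forall_mem_list
  intro a ha b hb
  simp only [List.mem_map] at ha hb
  obtain ⟨a', ha', rfl⟩ := ha
  obtain ⟨b', hb', rfl⟩ := hb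
  exact hcomm a' ha' b' hb'

/-- span of all `f`-words applied to `v`. -/
def Wspan (D : Data 𝓘 g) (v : V) : Submodule ℂ V :=
  Submodule.span ℂ (Set.range (fun L : List 𝓘 => fwordOn D L v))

lemma fword_mem_Wspan (D : Data 𝓘 g) (v : V) (L : List 𝓘) : fwordOn D L v ∈ Wspan D v :=
  Submodule.subset_span ⟨L, rfl⟩

lemma f_mem_Wspan (D : Data 𝓘 g) (v : V) (i : 𝓘) {x : V} (hx : x ∈ Wspan D v) :
    ⁅D.f i, x⁆ ∈ Wspan D v := by
  induction hx using Submodule.span_induction with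
  | mem x h =>
      obtain ⟨L, rfl⟩ := h
      exact fword_mem_Wspan D v (i :: L)
  | zero => rw [lie_zero]; exact (Wspan D v).zero_mem
  | add x y hx hy ihx ihy => rw [lie_add]; exact (Wspan D v).add_mem ihx ihy
  | smul a x hx ih => rw [lie_smul]; exact (Wspan D v).smul_mem a ih

lemma h_mem_Wspan (D : Data 𝓘 g) {lam : Module.Dual ℂ D.H} {v : V}
    (hv : v ∈ wtSpace D.H V lam) (h : D.H) {x : V} (hx : x ∈ Wspan D v) :
    ⁅(h : g), x⁆ ∈ Wspan D v := by
  induction hx using Submodule.span_induction with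
  | mem x hmem =>
      obtain ⟨L, rfl⟩ := hmem
      show ⁅(h : g), fwordOn D L v⁆ ∈ Wspan D v
      rw [fwordOn_mem_wtSpace D hv L h]
      exact (Wspan D v).smul_mem _ (fword_mem_Wspan D v L)
  | zero => rw [lie_zero]; exact (Wspan D v).zero_mem
  | add x y hx hy ihx ihy => rw [lie_add]; exact (Wspan D v).add_mem ihx ihy
  | smul a x hx ih => rw [lie_smul]; exact (Wspan D v).smul_mem a ih

lemma e_mem_Wspan (D : Data 𝓘 g) {lam : Module.Dual ℂ D.H} {v : V}
    (hv : v ∈ wtSpace D.H V lam) (he : ∀ i, ⁅D.e i, v⁆ = 0) (i : 𝓘) {x : V}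
    (hx : x ∈ Wspan D v) : ⁅D.e i, x⁆ ∈ Wspan D v := by
  induction hx using Submodule.span_induction with
  | mem x hmem =>
      obtain ⟨L, rfl⟩ := hmem
      show ⁅D.e i, fwordOn D L v⁆ ∈ Wspan D v
      induction L with
      | nil => rw [fwordOn_nil, he i]; exact (Wspan D v).zero_mem
      | cons j L ih =>
          rw [fwordOn_cons, leibniz_lie]
          apply (Wspan D v).add_mem
          · by_cases hij : i = j
            · subst hij
              rw [D.lie_e_f_same i]
              exact h_mem_Wspan D hv (D.coroot i) (fword_mem_Wspan D v L)
            · rw [D.lie_e_f_ne i j hij, zero_lie]; exact (Wspan D v).zero_mem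
          · exact f_mem_Wspan D v j ih
  | zero => rw [lie_zero]; exact (Wspan D v).zero_mem
  | add x y hx hy ihx ihy => rw [lie_add]; exact (Wspan D v).add_mem ihx ihy
  | smul a x hx ih => rw [lie_smul]; exact (Wspan D v).smul_mem a ih

lemma all_mem_Wspan (D : Data 𝓘 g) {lam : Module.Dual ℂ D.H} {v : V}
    (hv : v ∈ wtSpace D.H V lam) (he : ∀ i, ⁅D.e i, v⁆ = 0) (x : g) {w : V}
    (hw : w ∈ Wspan D v) : ⁅x, w⁆ ∈ Wspan D v := by
  let T : LieSubalgebra ℂ g :=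
    { carrier := {y | ∀ w ∈ Wspan D v, ⁅y, w⁆ ∈ Wspan D v}
      add_mem' := by
        intro a b ha hb w hw
        rw [add_lie]; exact (Wspan D v).add_mem (ha w hw) (hb w hw)
      zero_mem' := by
        intro w hw
        rw [zero_lie]; exact (Wspan D v).zero_mem
      smul_mem' := by
        intro t y hy w hw
        rw [smul_lie]; exact (Wspan D v).smul_mem t (hy w hw)
      lie_mem' := by
        intro a b ha hb w hw
        rw [lie_lie]
        exact (Wspan D v).sub_mem (ha _ (hb w hw)) (hb _ (ha w hw)) }
  have hsub : ((D.H : Set g) ∪ Set.range D.e ∪ Set.range D.f) ⊆ (T : Set g) := by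
    intro y hy
    rcases hy with (hy | hy) | hy
    · obtain ⟨h', rfl⟩ : ∃ h' : D.H, (h' : g) = y := ⟨⟨y, hy⟩, rfl⟩
      exact fun w hw => h_mem_Wspan D hv h' hw
    · obtain ⟨i, rfl⟩ := hy
      exact fun w hw => e_mem_Wspan D hv he i hw
    · obtain ⟨i, rfl⟩ := hy
      exact fun w hw => f_mem_Wspan D v i hw
  have : LieSubalgebra.lieSpan ℂ g ((D.H : Set g) ∪ Set.range D.e ∪ Set.range D.f) ≤ T :=
    LieSubalgebra.lieSpan_le.mpr hsub
  rw [D.generates] at this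
  exact this (LieSubalgebra.mem_top x) w hw

lemma mem_Wspan_of_hw (D : Data 𝓘 g) {lam : Module.Dual ℂ D.H} {v : V}
    (hv : v ∈ wtSpace D.H V lam) (he : ∀ i, ⁅D.e i, v⁆ = 0)
    (hspan : LieSubmodule.lieSpan ℂ g {v} = ⊤) (x : V) : x ∈ Wspan D v := by
  let LW : LieSubmodule ℂ g V :=
    { toSubmodule := Wspan D v
      lie_mem := fun {y} {m} hm => all_mem_Wspan D hv he y hm }
  have h1 : LieSubmodule.lieSpan ℂ g {v} ≤ LW := by
    rw [LieSubmodule.lieSpan_le]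
    intro u hu
    rw [Set.mem_singleton_iff] at hu
    rw [hu]
    exact fword_mem_Wspan D v []
  rw [hspan] at h1
  exact h1 (LieSubmodule.mem_top x)

lemma lie_h_mem_sup (D : Data 𝓘 g) (F : Finset (Module.Dual ℂ D.H)) (h : D.H) {z : V}
    (hz : z ∈ F.sup (wtSpace D.H V)) : ⁅(h : g), z⁆ ∈ F.sup (wtSpace D.H V) := by
  have key : F.sup (wtSpace D.H V) ≤
      Submodule.comap (LieModule.toEnd ℂ g V (h : g)) (F.sup (wtSpace D.H V)) := by
    apply Finset.sup_le
    intro ν hν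
    intro u hu
    rw [Submodule.mem_comap]
    have : LieModule.toEnd ℂ g V (h : g) u = ⁅(h : g), u⁆ := rfl
    rw [this, hu h]
    exact Submodule.smul_mem _ _ (Finset.le_sup (f := wtSpace D.H V) hν hu)
  have := key hz
  rw [Submodule.mem_comap] at this
  exact this

lemma sep_lemma (D : Data 𝓘 g) (F : Finset (Module.Dual ℂ D.H)) :
    ∀ μ : Module.Dual ℂ D.H, μ ∉ F → ∀ x : V, x ∈ wtSpace D.H V μ →
      x ∈ F.sup (wtSpace D.H V) → x = 0 := by
  induction F using Finset.induction_on with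
  | empty =>
      intro μ _ x _ hx
      rw [Finset.sup_empty] at hx
      simpa using hx
  | insert ν₀ F hnotmem ih =>
      intro μ hμ x hx hxF
      rw [Finset.sup_insert] at hxF
      obtain ⟨y, hy, z, hz, hyz⟩ := Submodule.mem_sup.mp hxF
      have hμν₀ : μ ≠ ν₀ := by
        intro hcon; exact hμ (hcon ▸ Finset.mem_insert_self _ _)
      have : ∃ h : D.H, ν₀ h ≠ μ h := by
        by_contra hcon
        push_neg at hcon
        exact hμν₀ (LinearMap.ext fun h => (hcon h).symm)
      obtain ⟨h, hh⟩ := this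
      have hu1 : ⁅(h : g), x⁆ - ν₀ h • x = (μ h - ν₀ h) • x := by
        rw [hx h, sub_smul]
      have hu2 : ⁅(h : g), x⁆ - ν₀ h • x = ⁅(h : g), z⁆ - ν₀ h • z := by
        rw [← hyz, lie_add, hy h, smul_add]
        abel
      have hmemF : (μ h - ν₀ h) • x ∈ F.sup (wtSpace D.H V) := by
        rw [← hu1, hu2]
        exact Submodule.sub_mem _ (lie_h_mem_sup D F h hz) (Submodule.smul_mem _ _ hz)
      have hmemμ : (μ h - ν₀ h) • x ∈ wtSpace D.H V μ := Submodule.smul_mem _ _ hx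
      have hμF : μ ∉ F := fun hcon => hμ (Finset.mem_insert_of_mem hcon)
      have := ih μ hμF _ hmemμ hmemF
      have hsc : (μ h - ν₀ h) ≠ 0 := sub_ne_zero.mpr (fun hcon => hh hcon.symm)
      exact (smul_eq_zero.mp this).resolve_left hsc

lemma wtSpace_eq_bot_of_words_zero (D : Data 𝓘 g) {lam : Module.Dual ℂ D.H} {v : V}
    (hv : v ∈ wtSpace D.H V lam) (he : ∀ i, ⁅D.e i, v⁆ = 0)
    (hspan : LieSubmodule.lieSpan ℂ g {v} = ⊤) (μ : Module.Dual ℂ D.H)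
    (hall : ∀ L : List 𝓘, lam - (L.map D.α).sum = μ → fwordOn D L v = 0) :
    wtSpace D.H V μ = ⊥ := by
  rw [Submodule.eq_bot_iff]
  intro x hx
  have hxW : x ∈ Wspan D v := mem_Wspan_of_hw D hv he hspan x
  have hsub : Set.range (fun L : List 𝓘 => fwordOn D L v) ⊆
      {u | ∃ L : List 𝓘, lam - (L.map D.α).sum ≠ μ ∧ u = fwordOn D L v} ∪ {0} := by
    rintro u ⟨L, rfl⟩
    by_cases hLμ : lam - (L.map D.α).sum = μ
    · right; exact hall L hLμ
    · left; exact ⟨L, hLμ, rfl⟩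
  have hxW2 : x ∈ Submodule.span ℂ
      ({u | ∃ L : List 𝓘, lam - (L.map D.α).sum ≠ μ ∧ u = fwordOn D L v} : Set V) := by
    have h1 := Submodule.span_mono hsub hxW
    rw [Submodule.span_union, Submodule.span_zero_singleton, sup_bot_eq] at h1
    exact h1
  obtain ⟨Tfin, hTsub, hxT⟩ := Submodule.mem_span_finite_of_mem_span hxW2
  classical
  let ω : V → Module.Dual ℂ D.H := fun u =>
    if hex : ∃ ν : Module.Dual ℂ D.H, ν ≠ μ ∧ u ∈ wtSpace D.H V ν then hex.choose else 0
  have hω : ∀ u ∈ Tfin, ω u ≠ μ ∧ u ∈ wtSpace D.H V (ω u) := by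
    intro u hu
    have := hTsub hu
    obtain ⟨L, hL, rfl⟩ := this
    have hex : ∃ ν : Module.Dual ℂ D.H, ν ≠ μ ∧ fwordOn D L v ∈ wtSpace D.H V ν :=
      ⟨lam - (L.map D.α).sum, hL, fwordOn_mem_wtSpace D hv L⟩
    simp only [ω, dif_pos hex]
    exact hex.choose_spec
  set F : Finset (Module.Dual ℂ D.H) := Tfin.image ω with hF
  have hμF : μ ∉ F := by
    intro hcon
    rw [hF, Finset.mem_image] at hcon
    obtain ⟨u, hu, hωu⟩ := hcon
    exact (hω u hu).1 hωu
  have hxF : x ∈ F.sup (wtSpace D.H V) := by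
    have : Submodule.span ℂ (↑Tfin : Set V) ≤ F.sup (wtSpace D.H V) := by
      rw [Submodule.span_le]
      intro u hu
      exact Finset.le_sup (f := wtSpace D.H V) (Finset.mem_image_of_mem ω hu) (hω u hu).2
    exact this hxT
  exact sep_lemma D F μ hμF x hx hxF

variable [Fintype 𝓘] [DecidableEq 𝓘]

lemma sum_map_alpha (D : Data 𝓘 g) (L : List 𝓘) :
    (L.map D.α).sum = ∑ i : 𝓘, (L.count i : ℂ) • D.α i := by
  induction L with
  | nil => simp
  | cons j L ih =>
      rw [List.map_cons, List.sum_cons, ih]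
      have hc : ∀ i : 𝓘, ((List.count i (j :: L) : ℂ)) =
          (List.count i L : ℂ) + if i = j then 1 else 0 := by
        intro i
        by_cases h : i = j <;> simp [List.count_cons, h] <;> exact Ne.symm h
      simp_rw [hc, add_smul, ite_smul, one_smul, zero_smul, Finset.sum_add_distrib,
        Finset.sum_ite_eq' Finset.univ, Finset.mem_univ, if_true]
      abel

lemma count_eq_of_sum_eq (D : Data 𝓘 g) (L : List 𝓘) (d : 𝓘 → ℂ)
    (h : (L.map D.α).sum = ∑ i : 𝓘, d i • D.α i) : ∀ i, (L.count i : ℂ) = d i := by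
  have h2 : ∑ i : 𝓘, ((L.count i : ℂ) - d i) • D.α i = 0 := by
    simp_rw [sub_smul, Finset.sum_sub_distrib, ← sum_map_alpha D L, h, sub_self]
  intro i
  have := (Fintype.linearIndependent_iff.mp D.indepSimple) _ h2 i
  exact sub_eq_zero.mp this

/-- canonical monomial list over a finset with exponents `d`. -/
noncomputable def LClist (S : Finset 𝓘) (d : 𝓘 → ℕ) : List 𝓘 :=
  S.toList.flatMap (fun k => List.replicate (d k) k)

lemma count_flatMap_replicate (M : List 𝓘) (hM : M.Nodup) (d : 𝓘 → ℕ) (i : 𝓘) :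
    (M.flatMap fun k => List.replicate (d k) k).count i = if i ∈ M then d i else 0 := by
  induction M with
  | nil => simp
  | cons j M ih =>
      rw [List.flatMap_cons, List.count_append]
      have hjM : j ∉ M := (List.nodup_cons.mp hM).1
      have ih' := ih (List.nodup_cons.mp hM).2
      by_cases h : i = j
      · subst h
        rw [ih']
        simp [List.count_replicate, hjM]
      · rw [ih']
        by_cases h2 : i ∈ M <;> simp [List.count_replicate, h, h2, List.mem_cons, Ne.symm h]

lemma count_LClist (S : Finset 𝓘) (d : 𝓘 → ℕ) (i : 𝓘) :
    (LClist S d).count i = if i ∈ S then d i else 0 := by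
  rw [LClist, count_flatMap_replicate _ (Finset.nodup_toList S)]
  simp [Finset.mem_toList]

lemma mem_LClist {S : Finset 𝓘} {d : 𝓘 → ℕ} {i : 𝓘} (h : i ∈ LClist S d) : i ∈ S := by
  by_contra hcon
  have := count_LClist S d i
  rw [if_neg hcon] at this
  exact (List.count_eq_zero.mp this) h

lemma commute_of_indep (D : Data 𝓘 g) {S : Set 𝓘} (hS : IndepSet D S) {a b : 𝓘}
    (ha : a ∈ S) (hb : b ∈ S) : Commute (Fop D V a) (Fop D V b) := by
  by_cases hab : a = b
  · subst hab; exact Commute.refl _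
  · exact commute_Fop D (f_f_commute D (Ne.symm hab) (hS b hb a ha (Ne.symm hab)))

lemma fwordOn_eq_of_count (D : Data 𝓘 g) {S : Set 𝓘} (hS : IndepSet D S)
    {L₁ L₂ : List 𝓘} (hmem : ∀ i ∈ L₁, i ∈ S)
    (hcount : ∀ i, L₁.count i = L₂.count i) (w : V) :
    fwordOn D L₁ w = fwordOn D L₂ w := by
  apply fwordOn_perm D (List.perm_iff_count.mpr hcount)
  intro a ha b hb
  exact commute_of_indep D hS (hmem a ha) (hmem b hb)

lemma wt_mem_of_indep (D : Data 𝓘 g) (V : Type) [AddCommGroup V] [Module ℂ V]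
    [LieRingModule g V] [LieModule ℂ g V] (lam : Module.Dual ℂ D.H)
    (hlam : lam ∈ wtSet D.H V) (hP : ∀ i : 𝓘, ∃ k : ℕ, lam (D.coroot i) = (k : ℂ))
    (T : Finset 𝓘) (hind : IndepSet D (↑T : Set 𝓘)) (hTc : ∀ i ∈ T, i ∉ JV D V lam) :
    (lam - ∑ k ∈ T, (lam (D.coroot k) + 1) • D.α k) ∈ wtSet D.H V := by
  by_contra hcon
  classical
  set s : Finset (Finset 𝓘) := T.powerset.filter
    (fun I => (lam - ∑ k ∈ I, (lam (D.coroot k) + 1) • D.α k) ∉ wtSet D.H V) with hs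
  have hTs : T ∈ s := by
    rw [hs, Finset.mem_filter]
    exact ⟨Finset.mem_powerset_self T, hcon⟩
  obtain ⟨m, hm, hmin⟩ : ∃ m ∈ s, ∀ x ∈ s, ¬x < m := by
    obtain ⟨m, hm⟩ := Finset.exists_minimal (s := s) ⟨T, hTs⟩
    exact ⟨m, hm.1, fun x hx hlt => hm.not_lt hx hlt⟩
  rw [hs, Finset.mem_filter, Finset.mem_powerset] at hm
  obtain ⟨hmT, hmwt⟩ := hm
  have hmne : m.Nonempty := by
    rcases Finset.eq_empty_or_nonempty m with h | h
    · exfalso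
      apply hmwt
      rw [h]
      simpa using hlam
    · exact h
  obtain ⟨i, hi⟩ := hmne
  apply hTc i (hmT hi)
  refine ⟨m, ?_, ?_, hmwt, ?_, hi⟩
  · intro j _
    exact hP j
  · intro a ha b hb hab
    exact hind a (hmT ha) b (hmT hb) hab
  · intro K hK
    by_contra hKwt
    have hKs : K ∈ s := by
      rw [hs, Finset.mem_filter, Finset.mem_powerset]
      exact ⟨le_trans hK.subset hmT, hKwt⟩
    exact hmin K hKs (Finset.lt_iff_ssubset.mpr hK)

lemma indep_monomial_ne_zero (D : Data 𝓘 g) {lam : Module.Dual ℂ D.H} {v : V}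
    (hv : v ∈ wtSpace D.H V lam) (hv0 : v ≠ 0) (he : ∀ i, ⁅D.e i, v⁆ = 0)
    (hspan : LieSubmodule.lieSpan ℂ g {v} = ⊤)
    (hP : ∀ i : 𝓘, ∃ k : ℕ, lam (D.coroot i) = (k : ℂ))
    (S : Finset 𝓘) (hS : IndepSet D (↑S : Set 𝓘)) (hSc : ∀ i ∈ S, i ∉ JV D V lam)
    (d : 𝓘 → ℕ) : fwordOn D (LClist S d) v ≠ 0 := by
  suffices H : ∀ N : ℕ, ∀ d : 𝓘 → ℕ, (∑ k ∈ S, d k) = N → fwordOn D (LClist S d) v ≠ 0 by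
    exact H _ d rfl
  intro N
  induction N using Nat.strong_induction_on with
  | _ N ih =>
  intro d hd hzero
  by_cases hcase : ∃ k ∈ S, d k ≠ 0 ∧ lam (D.coroot k) + 1 ≠ (d k : ℂ)
  · -- strip one f_k
    obtain ⟨k, hkS, hk0, hkne⟩ := hcase
    set R : List 𝓘 := LClist (S.erase k) d with hR
    set w : V := fwordOn D R v with hw
    have hmemR : ∀ i ∈ R, i ∈ S.erase k := fun i hi => mem_LClist hi
    have hkR : k ∉ R := fun h => (Finset.mem_erase.mp (hmemR k h)).1 rfl
    have hsplit : fwordOn D (LClist S d) v = actPow (D.f k) (d k) w := by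
      rw [hw, actPow_eq_fwordOn_replicate, ← fwordOn_append]
      apply fwordOn_eq_of_count D hS (fun i hi => mem_LClist hi)
      intro i
      rw [count_LClist, List.count_append, List.count_replicate, count_LClist]
      by_cases h : i = k
      · subst h; simp [Finset.mem_erase, hkS]
      · by_cases h2 : i ∈ S <;> simp [h, Ne.symm h, h2, Finset.mem_erase]
    have hwwt : w ∈ wtSpace D.H V (lam - (R.map D.α).sum) := fwordOn_mem_wtSpace D hv R
    have hνk : (lam - (R.map D.α).sum) (D.coroot k) = lam (D.coroot k) := by
      have hsum0 : ((R.map D.α).sum) (D.coroot k) = 0 := by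
        rw [sum_map_alpha D R, LinearMap.coe_sum, Finset.sum_apply]
        apply Finset.sum_eq_zero
        intro i _
        rw [LinearMap.smul_apply, smul_eq_mul]
        by_cases hc : i ∈ S.erase k
        · rw [hS i (Finset.mem_of_mem_erase hc) k hkS (Finset.mem_erase.mp hc).1, mul_zero]
        · rw [hR, count_LClist, if_neg hc]
          norm_num
      rw [LinearMap.sub_apply, hsum0, sub_zero]
    have hek : ⁅D.e k, w⁆ = 0 := lie_e_fwordOn D (he k) hkR
    obtain ⟨m, hm⟩ := Nat.exists_eq_succ_of_ne_zero hk0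
    have hzero' : actPow (D.f k) (m + 1) w = 0 := by
      rw [← Nat.succ_eq_add_one, ← hm, ← hsplit]; exact hzero
    have heq := lie_e_actPow D hwwt hek m
    rw [hzero', lie_zero] at heq
    have hsc : (((m : ℂ) + 1) * ((lam - (R.map D.α).sum) (D.coroot k) - (m : ℂ))) ≠ 0 := by
      apply mul_ne_zero
      · exact_mod_cast Nat.succ_ne_zero m
      · rw [hνk]
        intro hcon
        apply hkne
        rw [hm]
        push_cast
        linear_combination hcon
    have hred0 : actPow (D.f k) m w = 0 := by
      have := (smul_eq_zero.mp heq.symm).resolve_left hsc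
      exact this
    have hred : actPow (D.f k) m w = fwordOn D (LClist S (Function.update d k m)) v := by
      rw [hw, actPow_eq_fwordOn_replicate, ← fwordOn_append]
      symm
      apply fwordOn_eq_of_count D hS (fun i hi => mem_LClist hi)
      intro i
      rw [count_LClist, List.count_append, List.count_replicate, count_LClist]
      by_cases h : i = k
      · subst h; simp [Finset.mem_erase, hkS, Function.update_self]
      · by_cases h2 : i ∈ S <;>
          simp [h, Ne.symm h, h2, Finset.mem_erase, Function.update_of_ne h]
    have hlt : (∑ k' ∈ S, Function.update d k m k') < N := by
      have h1 : d k + ∑ x ∈ S.erase k, d x = N := by rw [Finset.add_sum_erase S d hkS]; exact hd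
      rw [Finset.sum_update_of_mem hkS, Finset.sdiff_singleton_eq_erase]
      omega
    exact ih _ hlt (Function.update d k m) rfl (hred ▸ hred0)
  · -- all exponents are 0 or λ_k + 1
    push_neg at hcase
    set T : Finset 𝓘 := S.filter (fun k => d k ≠ 0) with hT
    have hTmem : ∀ i, i ∈ T ↔ i ∈ S ∧ d i ≠ 0 := by
      intro i; rw [hT, Finset.mem_filter]
    by_cases hTe : T = ∅
    · have hnil : LClist S d = [] := by
        rw [List.eq_nil_iff_forall_not_mem]
        intro i hi
        have hiS := mem_LClist hi
        have : (LClist S d).count i ≠ 0 := by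
          intro hc; exact (List.count_eq_zero.mp hc) hi
        rw [count_LClist, if_pos hiS] at this
        have : i ∈ T := (hTmem i).mpr ⟨hiS, this⟩
        rw [hTe] at this
        exact absurd this (Finset.notMem_empty i)
      rw [hnil, fwordOn_nil] at hzero
      exact hv0 hzero
    · have hlamwt : lam ∈ wtSet D.H V := by
        intro hb
        rw [hb] at hv
        exact hv0 ((Submodule.mem_bot ℂ).mp hv)
      have hTS : ∀ i ∈ T, i ∈ S := fun i hi => ((hTmem i).mp hi).1
      have hTind : IndepSet D (↑T : Set 𝓘) :=
        fun a ha b hb hab => hS a (hTS a ha) b (hTS b hb) hab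
      have hwtmem := wt_mem_of_indep D V lam hlamwt hP T hTind
        (fun i hi => hSc i (hTS i hi))
      apply hwtmem
      apply wtSpace_eq_bot_of_words_zero D hv he hspan
      intro L hL
      have hsum : (L.map D.α).sum =
          ∑ i : 𝓘, (if i ∈ T then lam (D.coroot i) + 1 else 0) • D.α i := by
        have h1 : (L.map D.α).sum = ∑ k ∈ T, (lam (D.coroot k) + 1) • D.α k :=
          sub_right_inj.mp hL
        rw [h1]
        simp_rw [ite_smul, zero_smul]
        rw [Finset.sum_ite_mem, Finset.univ_inter]
      have hcnt := count_eq_of_sum_eq D L _ hsum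
      have hcnt2 : ∀ i, L.count i = (LClist S d).count i := by
        intro i
        have hci := hcnt i
        rw [count_LClist]
        by_cases hiT : i ∈ T
        · rw [if_pos hiT] at hci
          have hiS := hTS i hiT
          have hdi : lam (D.coroot i) + 1 = (d i : ℂ) :=
            hcase i hiS ((hTmem i).mp hiT).2
          rw [if_pos hiS]
          have : (L.count i : ℂ) = (d i : ℂ) := by rw [hci, hdi]
          exact_mod_cast this
        · rw [if_neg hiT] at hci
          have hci0 : L.count i = 0 := by exact_mod_cast hci
          rw [hci0]
          by_cases hiS : i ∈ S
          · have : d i = 0 := by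
              by_contra hdi
              exact hiT ((hTmem i).mpr ⟨hiS, hdi⟩)
            rw [if_pos hiS, this]
          · rw [if_neg hiS]
      have hmemL : ∀ i ∈ L, i ∈ (↑S : Set 𝓘) := by
        intro i hi
        have : L.count i ≠ 0 := fun hc => (List.count_eq_zero.mp hc) hi
        rw [hcnt2 i, count_LClist] at this
        by_cases hiS : i ∈ S
        · exact hiS
        · rw [if_neg hiS] at this; exact absurd rfl this
      rw [fwordOn_eq_of_count D hS hmemL hcnt2 v]
      exact hzero

lemma foldr_actPow_eq_fword (D : Data 𝓘 g) (c : 𝓘 → ℕ) (v : V) (M : List 𝓘) :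
    M.foldr (fun i w => actPow (D.f i) (c i) w) v =
      fwordOn D (M.flatMap fun i => List.replicate (c i) i) v := by
  induction M with
  | nil => rfl
  | cons a M ih =>
      rw [List.foldr_cons, ih, List.flatMap_cons, fwordOn_append,
        actPow_eq_fwordOn_replicate]

lemma main_list (D : Data 𝓘 g) {lam : Module.Dual ℂ D.H} {v : V}
    (hv : v ∈ wtSpace D.H V lam) (hv0 : v ≠ 0) (he : ∀ i, ⁅D.e i, v⁆ = 0)
    (hspan : LieSubmodule.lieSpan ℂ g {v} = ⊤)
    (hP : ∀ i : 𝓘, ∃ k : ℕ, lam (D.coroot i) = (k : ℂ)) (c : 𝓘 → ℕ) :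
    ∀ M : List 𝓘, M.Nodup → (∀ j ∈ M, j ∉ JV D V lam) →
      (∀ a : 𝓘, ∀ M₂ : List 𝓘, (a :: M₂) <:+ M →
        (IndepSet D {j | j ∈ a :: M₂} ∨
          ∃ b ∈ M₂, D.α a (D.coroot b) ≠ 0 ∧ c a ≤ c b)) →
      M.foldr (fun i w => actPow (D.f i) (c i) w) v ≠ 0 := by
  intro M
  induction M with
  | nil => intro _ _ _; exact hv0
  | cons a M₂ ih =>
      intro hnd hJV hsuf
      have hndM₂ : M₂.Nodup := (List.nodup_cons.mp hnd).2
      have haM₂ : a ∉ M₂ := (List.nodup_cons.mp hnd).1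
      have htail : M₂.foldr (fun i w => actPow (D.f i) (c i) w) v ≠ 0 := by
        apply ih hndM₂ (fun j hj => hJV j (List.mem_cons_of_mem a hj))
        intro a' M₂' hsuf'
        exact hsuf a' M₂' (hsuf'.trans (List.suffix_cons a M₂))
      rw [List.foldr_cons]
      set L₂ : List 𝓘 := M₂.flatMap fun i => List.replicate (c i) i with hL₂
      have htailw : M₂.foldr (fun i w => actPow (D.f i) (c i) w) v = fwordOn D L₂ v :=
        foldr_actPow_eq_fword D c v M₂
      have hmemL₂ : ∀ i ∈ L₂, i ∈ M₂ := by
        intro i hi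
        rw [hL₂, List.mem_flatMap] at hi
        obtain ⟨j, hj, hrep⟩ := hi
        rw [List.eq_of_mem_replicate hrep]
        exact hj
      rcases hsuf a M₂ (List.suffix_refl _) with hindep | ⟨b, hbM₂, hαb, hcb⟩
      · -- independent case
        set S : Finset 𝓘 := (a :: M₂).toFinset with hS
        have hmemS : ∀ j : 𝓘, j ∈ S ↔ j ∈ a :: M₂ := fun j => List.mem_toFinset
        have hSind : IndepSet D (↑S : Set 𝓘) := by
          intro x hx y hy hxy
          exact hindep x ((hmemS x).mp hx) y ((hmemS y).mp hy) hxy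
        have hSc : ∀ i ∈ S, i ∉ JV D V lam := fun i hi => hJV i ((hmemS i).mp hi)
        have key := indep_monomial_ne_zero D hv hv0 he hspan hP S hSind hSc c
        have heq : actPow (D.f a) (c a) (M₂.foldr (fun i w => actPow (D.f i) (c i) w) v)
            = fwordOn D (LClist S c) v := by
          rw [show actPow (D.f a) (c a) (M₂.foldr (fun i w => actPow (D.f i) (c i) w) v)
              = (a :: M₂).foldr (fun i w => actPow (D.f i) (c i) w) v from rfl,
            foldr_actPow_eq_fword D c v (a :: M₂)]
          apply fwordOn_eq_of_count D hSind
          · intro i hi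
            rw [List.mem_flatMap] at hi
            obtain ⟨j, hj, hrep⟩ := hi
            rw [List.eq_of_mem_replicate hrep]
            exact (hmemS j).mpr hj
          · intro i
            rw [count_flatMap_replicate _ hnd, count_LClist]
            by_cases h : i ∈ a :: M₂
            · rw [if_pos h, if_pos ((hmemS i).mpr h)]
            · rw [if_neg h, if_neg (fun hc => h ((hmemS i).mp hc))]
        rw [heq]
        exact key
      · -- stripping case
        rw [htailw]
        set w : V := fwordOn D L₂ v with hw
        have hwwt : w ∈ wtSpace D.H V (lam - (L₂.map D.α).sum) :=
          fwordOn_mem_wtSpace D hv L₂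
        have haL₂ : a ∉ L₂ := fun h => haM₂ (hmemL₂ a h)
        have hea : ⁅D.e a, w⁆ = 0 := lie_e_fwordOn D (he a) haL₂
        have hw0 : w ≠ 0 := by rw [← htailw]; exact htail
        obtain ⟨K, hK⟩ := hP a
        -- the weight evaluated at the coroot of `a`
        set z : ℤ := (K : ℤ) - ∑ i : 𝓘, (if i ∈ M₂ then (c i : ℤ) else 0) * D.A a i with hz
        have hμz : (lam - (L₂.map D.α).sum) (D.coroot a) = (z : ℂ) := by
          rw [LinearMap.sub_apply, hK]
          rw [sum_map_alpha D L₂, LinearMap.coe_sum, Finset.sum_apply]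
          have hterm : ∀ i : 𝓘, ((L₂.count i : ℂ) • D.α i) (D.coroot a)
              = (if i ∈ M₂ then (c i : ℂ) else 0) * (D.A a i : ℂ) := by
            intro i
            rw [LinearMap.smul_apply, smul_eq_mul, D.pairing_eq]
            congr 1
            rw [hL₂, count_flatMap_replicate _ hndM₂]
            by_cases h : i ∈ M₂ <;> simp [h]
          simp_rw [hterm]
          rw [hz]
          push_cast
          ring
        have hzc : (c a : ℤ) ≤ z := by
          rw [hz]
          have hnonneg : ∀ i ∈ Finset.univ,
              0 ≤ -((if i ∈ M₂ then (c i : ℤ) else 0) * D.A a i) := by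
            intro i _
            by_cases h : i ∈ M₂
            · rw [if_pos h]
              have hia : a ≠ i := fun hc => haM₂ (hc ▸ h)
              have hA : D.A a i ≤ 0 := D.A_offdiag a i hia
              have : (c i : ℤ) * D.A a i ≤ 0 :=
                mul_nonpos_of_nonneg_of_nonpos (by positivity) hA
              omega
            · rw [if_neg h]; ring_nf; omega
          have hble : (c b : ℤ) ≤ -((if b ∈ M₂ then (c b : ℤ) else 0) * D.A a b) := by
            rw [if_pos hbM₂]
            have hba : a ≠ b := fun hc => haM₂ (hc ▸ hbM₂)
            have hA0 : D.A a b ≠ 0 := by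
              intro hc
              apply hαb
              rw [D.pairing_eq]
              have : D.A b a = 0 := (D.A_zero_iff a b).mp hc
              rw [this]
              norm_num
            have hA : D.A a b ≤ -1 := by
              have := D.A_offdiag a b (fun hc => haM₂ (hc ▸ hbM₂))
              omega
            nlinarith [Int.ofNat_nonneg (c b)]
          have hsum : (c b : ℤ) ≤
              ∑ i : 𝓘, -((if i ∈ M₂ then (c i : ℤ) else 0) * D.A a i) :=
            le_trans hble (Finset.single_le_sum hnonneg (Finset.mem_univ b))
          have hKnn : (0 : ℤ) ≤ (K : ℤ) := Int.ofNat_nonneg K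
          have hcab : (c a : ℤ) ≤ (c b : ℤ) := by exact_mod_cast hcb
          rw [Finset.sum_neg_distrib] at hsum
          omega
        apply actPow_ne_zero D hwwt hea hw0 (c a)
        intro j hj hcon
        rw [hμz] at hcon
        have : z = (j : ℤ) := by exact_mod_cast hcon
        omega
end Dev
/-- Proposition 1.13(a), via Algorithm 1.12: let `λ ∈ P⁺` and let
`V` be a highest weight module with `J_V^c ≠ ∅`, `|J_V^c| = n`.  Fix `c(i) ∈ ℤ≥0` for
`i ∈ J_V^c`, and an enumeration `i_1, …, i_n` of `J_V^c` such that for each `t`, either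
`{i_t, …, i_n}` is independent, or there is `r > t` with `⟨α_{i_t}, α_{i_r}^∨⟩ ≠ 0` and
`c(i_r) ≥ c(i_t)`.  Then `f_{i_1}^{c(i_1)} ⋯ f_{i_n}^{c(i_n)} · v_λ ≠ 0`. -/
theorem free_direction_monomial_nonvanishing
    {𝓘 : Type} [Fintype 𝓘] [DecidableEq 𝓘] {g : Type} [LieRing g] [LieAlgebra ℂ g]
    (D : Data 𝓘 g)
    (V : Type) [AddCommGroup V] [Module ℂ V] [LieRingModule g V] [LieModule ℂ g V]
    (lam : Module.Dual ℂ D.H) (v : V) (hV : IsHW D V lam v)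
    (hP : ∀ i : 𝓘, ∃ k : ℕ, lam (D.coroot i) = (k : ℂ))
    (n : ℕ) (hn : 0 < n) (idx : Fin n → 𝓘) (hinj : Function.Injective idx)
    (hrange : ∀ j : 𝓘, (∃ t : Fin n, idx t = j) ↔ j ∉ JV D V lam)
    (c : 𝓘 → ℕ)
    (henum : ∀ t : Fin n,
      IndepSet D {j | ∃ r : Fin n, t ≤ r ∧ idx r = j} ∨
        ∃ r : Fin n, t < r ∧ D.α (idx t) (D.coroot (idx r)) ≠ 0 ∧ c (idx t) ≤ c (idx r)) :
    (List.ofFn idx).foldr (fun i w => actPow (D.f i) (c i) w) v ≠ 0 := by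
  have hv := hV.2.1
  have hv0 := hV.1
  have he := hV.2.2.1
  have hspan := hV.2.2.2
  apply main_list D hv hv0 he hspan hP c (List.ofFn idx)
      (List.nodup_ofFn.mpr hinj)
  · intro j hj
    rw [List.mem_ofFn] at hj
    obtain ⟨t, ht⟩ := hj
    exact (hrange j).mp ⟨t, ht⟩
  · intro a M₂ hsuf
    obtain ⟨pre, hpre⟩ := hsuf
    have hlen : pre.length + (M₂.length + 1) = n := by
      have := congrArg List.length hpre
      simpa [List.length_append] using this
    have htn : pre.length < n := by omega
    set t : Fin n := ⟨pre.length, htn⟩ with htdef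
    have htval : (t : ℕ) = pre.length := rfl
    have hgetM : ∀ (q : ℕ) (hq : q < M₂.length + 1),
        (a :: M₂)[q] = idx ⟨pre.length + q, by omega⟩ := by
      intro q hq
      have h1 : (pre ++ a :: M₂)[pre.length + q]'(by simp [List.length_append]; omega)
          = (a :: M₂)[q]'(by simpa using hq) := by
        rw [List.getElem_append_right (by omega)]
        congr 1
        omega
      have h2 : (pre ++ a :: M₂)[pre.length + q]'(by simp [List.length_append]; omega)
          = idx ⟨pre.length + q, by omega⟩ := by
        have h3 : ∀ (r : ℕ) (hr : r < n), (List.ofFn idx)[r]'(by simpa using hr)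
            = idx ⟨r, hr⟩ := by
          intro r hr
          simp
        rw [← h3 (pre.length + q) (by omega)]
        exact (List.getElem_of_eq hpre.symm _).symm
      rw [← h1, h2]
    have hmem_iff : ∀ j : 𝓘, (j ∈ a :: M₂) ↔ ∃ r : Fin n, t ≤ r ∧ idx r = j := by
      intro j
      constructor
      · intro hj
        obtain ⟨q, hq, hgq⟩ := List.getElem_of_mem hj
        rw [List.length_cons] at hq
        refine ⟨⟨pre.length + q, by omega⟩, ?_, ?_⟩
        · rw [Fin.le_def]; simp [htval]
        · rw [← hgetM q hq, hgq]
      · rintro ⟨r, htr, rfl⟩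
        rw [Fin.le_def] at htr
        have hrn : (r : ℕ) < n := r.isLt
        have hq : (r : ℕ) - pre.length < M₂.length + 1 := by omega
        have := hgetM ((r : ℕ) - pre.length) hq
        have hr' : (⟨pre.length + ((r : ℕ) - pre.length), by omega⟩ : Fin n) = r := by
          apply Fin.ext
          simp
          omega
        rw [congrArg idx hr'] at this
        rw [← this]
        exact List.getElem_mem _
    have ha : a = idx t := by
      have := hgetM 0 (by omega)
      simpa using this
    rcases henum t with hindep | ⟨r, htr, hα, hc⟩
    · left
      have : {j | ∃ r : Fin n, t ≤ r ∧ idx r = j} = {j | j ∈ a :: M₂} := by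
        ext j
        exact ((hmem_iff j).symm)
      rw [← this]
      exact hindep
    · right
      refine ⟨idx r, ?_, ?_, ?_⟩
      · rw [Fin.lt_def] at htr
        have hq : (r : ℕ) - pre.length < M₂.length + 1 := by
          have := r.isLt; omega
        have hgr := hgetM ((r : ℕ) - pre.length) hq
        have hr' : (⟨pre.length + ((r : ℕ) - pre.length), by omega⟩ : Fin n) = r := by
          apply Fin.ext; simp; omega
        rw [congrArg idx hr'] at hgr
        have hmem : idx r ∈ a :: M₂ := by rw [← hgr]; exact List.getElem_mem _
        have hne : idx r ≠ a := by
          rw [ha]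
          intro hcon
          have hrt : r = t := hinj hcon
          rw [hrt] at htr
          exact lt_irrefl _ htr
        rcases List.mem_cons.mp hmem with hcon | hmem2
        · exact absurd hcon hne
        · exact hmem2
      · rw [ha]; exact hα
      · rw [ha]; exact hc


end KM
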